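/- Let Q ⊆ ℝ^n_+ be a covering set, let k be a positive integer, let t < n be a positive integer, and set Q' := proj_{[t]} Q. Then for every C' ∈ 𝓒(Q') there exists C ∈ 𝓒(Q) such that proj_{[t]} conv(C ∩ ℤ^n) = conv(C' ∩ ℤ^t). -/
import Mathlib


noncomputable section

/-- The integer points of ℝⁿ. -/
def intPoints {n : ℕ} : Set (Fin n → ℝ) := {x | ∀ i, ∃ z : ℤ, x i = (z : ℝ)}

/-- A covering set: {x ∈ ℝⁿ₊ : Mᵢ·x ≥ dᵢ ∀ i ∈ I} with nonnegative data and an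
arbitrary (possibly infinite) index set I. -/
def IsCoveringSet {n : ℕ} (Q : Set (Fin n → ℝ)) : Prop :=
  ∃ (ι : Type) (M : ι → Fin n → ℝ) (d : ι → ℝ),
    (∀ i j, 0 ≤ M i j) ∧ (∀ i, 0 ≤ d i) ∧
    Q = {x | (∀ j, 0 ≤ x j) ∧ ∀ i, d i ≤ ∑ j, M i j * x j}

/-- Λ(S): the linear functionals bounded above on S. -/
def Lambda {n : ℕ} (S : Set (Fin n → ℝ)) : Set (Fin n → ℝ) :=
  {f | BddAbove ((fun x => ∑ i, f i * x i) '' S)}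

/-- 𝓒(Q): the polyhedra cut out in ℝⁿ₊ by k valid inequalities of Q. -/
def aggC {n : ℕ} (k : ℕ) (Q : Set (Fin n → ℝ)) : Set (Set (Fin n → ℝ)) :=
  {C | ∃ f : Fin k → (Fin n → ℝ), (∀ j, f j ∈ Lambda Q) ∧
    C = {x | (∀ i, 0 ≤ x i) ∧
      ∀ j, ∑ i, f j i * x i ≤ sSup ((fun s => ∑ i, f j i * s i) '' Q)}}

/-- The k-aggregation closure 𝓐ₖ(Q) = ⋂_{C ∈ 𝓒(Q)} conv(C ∩ ℤⁿ). -/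
def aggClosure {n : ℕ} (k : ℕ) (Q : Set (Fin n → ℝ)) : Set (Fin n → ℝ) :=
  ⋂ C ∈ aggC k Q, convexHull ℝ (C ∩ intPoints)

/-- Orthogonal projection onto the first t coordinates. -/
def projT {n t : ℕ} (ht : t ≤ n) (S : Set (Fin n → ℝ)) : Set (Fin t → ℝ) :=
  (fun x : Fin n → ℝ => fun i : Fin t => x (Fin.castLE ht i)) '' S

lemma sum_lift {n t : ℕ} (htn : t ≤ n) (f : Fin t → ℝ) (s : Fin n → ℝ) :
    ∑ i : Fin n, (if h : (i : ℕ) < t then f ⟨i, h⟩ else 0) * s i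
      = ∑ i : Fin t, f i * s (Fin.castLE htn i) := by
  classical
  set emb : Fin t ↪ Fin n := ⟨Fin.castLE htn, Fin.castLE_injective htn⟩ with hemb
  have h1 : ∑ i ∈ (Finset.univ.map emb),
      (if h : (i : ℕ) < t then f ⟨i, h⟩ else 0) * s i
      = ∑ i : Fin n, (if h : (i : ℕ) < t then f ⟨i, h⟩ else 0) * s i := by
    refine Finset.sum_subset (Finset.subset_univ _) (fun x _ hx => ?_)
    have hnot : ¬ (x : ℕ) < t := by
      intro hlt
      exact hx (Finset.mem_map.mpr ⟨⟨(x : ℕ), hlt⟩, Finset.mem_univ _, by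
        simp [hemb, Fin.ext_iff]⟩)
    simp [hnot]
  rw [← h1, Finset.sum_map]
  refine Finset.sum_congr rfl (fun i _ => ?_)
  simp [hemb]

theorem proj_integer_hull_of_aggC {n t k : ℕ} (hk : 0 < k) (ht : 0 < t) (htn : t < n)
    (Q : Set (Fin n → ℝ)) (hQ : IsCoveringSet Q)
    (C' : Set (Fin t → ℝ)) (hC' : C' ∈ aggC k (projT htn.le Q)) :
    ∃ C ∈ aggC k Q,
      projT htn.le (convexHull ℝ (C ∩ intPoints)) = convexHull ℝ (C' ∩ intPoints) := by
  classical
  obtain ⟨f, hfΛ, hCdef⟩ := hC'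
  set g : Fin k → Fin n → ℝ :=
    fun j i => if h : (i : ℕ) < t then f j ⟨i, h⟩ else 0 with hg
  -- image sets agree
  have himg : ∀ j, ((fun s => ∑ i, g j i * s i) '' Q)
      = ((fun s => ∑ i, f j i * s i) '' (projT htn.le Q)) := by
    intro j
    unfold projT
    rw [Set.image_image]
    refine Set.image_congr (fun x _ => ?_)
    exact sum_lift htn.le (f j) x
  have hgΛ : ∀ j, g j ∈ Lambda Q := by
    intro j
    have := hfΛ j
    show BddAbove ((fun x => ∑ i, g j i * x i) '' Q)
    rw [himg j]
    exact this
  set C : Set (Fin n → ℝ) := {x | (∀ i, 0 ≤ x i) ∧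
      ∀ j, ∑ i, g j i * x i ≤ sSup ((fun s => ∑ i, g j i * s i) '' Q)} with hC
  refine ⟨C, ⟨g, hgΛ, rfl⟩, ?_⟩
  -- key set equality on integer points
  have hkey : projT htn.le (C ∩ intPoints) = C' ∩ intPoints := by
    ext x'
    constructor
    · rintro ⟨x, ⟨⟨hpos, hineq⟩, hint⟩, rfl⟩
      refine ⟨?_, fun i => hint _⟩
      rw [hCdef]
      refine ⟨fun i => hpos _, fun j => ?_⟩
      have := hineq j
      rw [himg j] at this
      calc ∑ i, f j i * x (Fin.castLE htn.le i)
          = ∑ i, g j i * x i := (sum_lift htn.le (f j) x).symm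
        _ ≤ _ := this
    · rintro ⟨hx', hint⟩
      rw [hCdef] at hx'
      obtain ⟨hpos, hineq⟩ := hx'
      refine ⟨fun i => if h : (i : ℕ) < t then x' ⟨i, h⟩ else 0, ⟨⟨?_, ?_⟩, ?_⟩, ?_⟩
      · intro i
        by_cases h : (i : ℕ) < t <;> simp [h]
        exact hpos _
      · intro j
        rw [himg j]
        have : ∑ i, g j i *
            (if h : (i : ℕ) < t then x' ⟨i, h⟩ else 0) = ∑ i, f j i * x' i := by
          rw [hg]
          rw [sum_lift htn.le (f j) (fun i => if h : (i : ℕ) < t then x' ⟨i, h⟩ else 0)]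
          refine Finset.sum_congr rfl (fun i _ => ?_)
          simp
        rw [this]
        exact hineq j
      · intro i
        by_cases h : (i : ℕ) < t
        · simpa [h] using hint ⟨i, h⟩
        · exact ⟨0, by simp [h]⟩
      · funext i
        simp
  -- projection is linear, commutes with convexHull
  have hlin : ∀ S : Set (Fin n → ℝ),
      projT htn.le S = (LinearMap.funLeft ℝ ℝ (Fin.castLE htn.le)) '' S := fun S => rfl
  rw [hlin, LinearMap.image_convexHull, ← hlin, hkey]
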